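/- Every simple transparent object of M(X) lies in the essential image of the functor F : G(X)-Rep → M(X); consequently F is an equivalence between G(X)-Rep and the full subcategory of transparent objects of M(X). -/

import Mathlib

/-- A crossed module: groups `X₁`, `X₂`, a right action of `X₁` on `X₂` by group
automorphisms (written `act m g` for `m^g`), and a boundary homomorphism
`δ : X₂ →* X₁` satisfying equivariance and the Peiffer identity. -/
structure CrossedModule (X₁ X₂ : Type) [Group X₁] [Group X₂] where
  act : X₂ → X₁ → X₂
  act_one : ∀ m : X₂, act m 1 = m
  act_mul : ∀ (m : X₂) (g h : X₁), act m (g * h) = act (act m g) h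
  act_hom : ∀ (m n : X₂) (g : X₁), act (m * n) g = act m g * act n g
  δ : X₂ →* X₁
  equivariance : ∀ (m : X₂) (g : X₁), δ (act m g) = g⁻¹ * δ m * g
  peiffer : ∀ m n : X₂, act m (δ n) = n⁻¹ * m * n

section Representations
open TensorProduct

variable {F : Type} [Field F] {X₁ X₂ : Type} [Group X₁] [Group X₂] [Fintype X₁] [Fintype X₂] [DecidableEq X₂]

/-- A representation of the crossed module `X` on the `F`-vector space `V`:
an `X₂`-grading, encoded by the family of projections `P m` onto the graded
components, together with an `X₁`-action `Q` such that `P(m)Q(g) = Q(g)P(m^g)`.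
These are the objects of the category `M(X)`. -/
structure XRep (F : Type) [Field F] {X₁ X₂ : Type} [Group X₁] [Group X₂] [Fintype X₂] [DecidableEq X₂]
    (X : CrossedModule X₁ X₂)
    (V : Type) [AddCommGroup V] [Module F V] where
  P : X₂ → (V →ₗ[F] V)
  Q : X₁ → (V →ₗ[F] V)
  P_orth : ∀ m n : X₂, (P m) ∘ₗ (P n) = if m = n then P m else 0
  P_total : (∑ m : X₂, P m) = LinearMap.id
  Q_one : Q 1 = LinearMap.id
  Q_mul : ∀ g h : X₁, Q (g * h) = Q g ∘ₗ Q h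
  PQ_compat : ∀ (m : X₂) (g : X₁), (P m) ∘ₗ (Q g) = (Q g) ∘ₗ (P (X.act m g))

variable {X : CrossedModule X₁ X₂}
variable {U V W U' V' W' : Type}
  [AddCommGroup U] [Module F U] [AddCommGroup V] [Module F V] [AddCommGroup W] [Module F W]
  [AddCommGroup U'] [Module F U'] [AddCommGroup V'] [Module F V'] [AddCommGroup W'] [Module F W']

/-- The grading of the tensor product: `(V ⊗ W)_m = ⊕_{nl = m} V_n ⊗ W_l`. -/
noncomputable def tensorP (A : XRep F X V) (B : XRep F X W) (m : X₂) :
    (V ⊗[F] W) →ₗ[F] (V ⊗[F] W) :=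
  ∑ n : X₂, TensorProduct.map (A.P n) (B.P (n⁻¹ * m))

/-- The diagonal `X₁`-action on the tensor product. -/
noncomputable def tensorQ (A : XRep F X V) (B : XRep F X W) (g : X₁) :
    (V ⊗[F] W) →ₗ[F] (V ⊗[F] W) :=
  TensorProduct.map (A.Q g) (B.Q g)

/-- The braiding `R_{V,W}(v ⊗ w) = ∑_{m ∈ X₂} Q_W(∂m) w ⊗ P_V(m) v`, written in terms
of the grading data `PA` on `V` and the action data `QB` on `W`. -/
noncomputable def braidAux (X : CrossedModule X₁ X₂)
    (PA : X₂ → (V →ₗ[F] V)) (QB : X₁ → (W →ₗ[F] W)) :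
    (V ⊗[F] W) →ₗ[F] (W ⊗[F] V) :=
  ∑ m : X₂, (TensorProduct.map (QB (X.δ m)) (PA m)) ∘ₗ
    (TensorProduct.comm F V W).toLinearMap

/-- The braiding `R_{V,W}` between two crossed-module representations. -/
noncomputable def braid (A : XRep F X V) (B : XRep F X W) :
    (V ⊗[F] W) →ₗ[F] (W ⊗[F] V) :=
  braidAux X A.P B.Q

/-- Morphisms in `M(X)`: linear maps compatible with the grading and the action. -/
def IsXRepHom (A : XRep F X V) (B : XRep F X W) (f : V →ₗ[F] W) : Prop :=
  (∀ m : X₂, f ∘ₗ A.P m = B.P m ∘ₗ f) ∧ (∀ g : X₁, f ∘ₗ A.Q g = B.Q g ∘ₗ f)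

end Representations

section Vacuum

variable (F : Type) [Field F] {X₁ X₂ : Type} [Group X₁] [Group X₂]
  [Fintype X₁] [Fintype X₂] [DecidableEq X₂]
  (X : CrossedModule X₁ X₂) [X.δ.range.Normal]

/-- The underlying vector space `k[ker ∂] ⊗ k(coker ∂)` of the vacuum object,
realized as the space of `F`-valued functions on `(ker ∂) × (coker ∂)`;
the basis vector `x ⊗ δ_{Iy}` corresponds to the indicator function of `(x, Iy)`. -/
abbrev VacuumCarrier : Type := (X.δ.ker × (X₁ ⧸ X.δ.range)) → F

/-- The grading projections of the vacuum object,
`P(m)(x ⊗ δ_{Iy}) = δ(m^y, x) (x ⊗ δ_{Iy})`, defined via a choice of coset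
representative. -/
noncomputable def vacuumP (m : X₂) : VacuumCarrier F X →ₗ[F] VacuumCarrier F X where
  toFun f := fun p => if X.act m (Quotient.out p.2) = (p.1 : X₂) then f p else 0
  map_add' f g := by funext p; by_cases h : X.act m (Quotient.out p.2) = (p.1 : X₂) <;> simp [h]
  map_smul' c f := by funext p; by_cases h : X.act m (Quotient.out p.2) = (p.1 : X₂) <;> simp [h]

/-- The `X₁`-action of the vacuum object, `Q(g)(x ⊗ δ_{Iy}) = x ⊗ δ_{Igy}`. -/
def vacuumQ (g : X₁) : VacuumCarrier F X →ₗ[F] VacuumCarrier F X where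
  toFun f := fun p => f (p.1, (QuotientGroup.mk g)⁻¹ * p.2)
  map_add' f g := by funext p; simp
  map_smul' c f := by funext p; simp

end Vacuum

section Simple

variable {F : Type} [Field F] {X₁ X₂ : Type} [Group X₁] [Group X₂]
  [Fintype X₁] [Fintype X₂] [DecidableEq X₂] {X : CrossedModule X₁ X₂}
  {V : Type} [AddCommGroup V] [Module F V]

/-- A representation of a crossed module is simple if it is nonzero and has no
nontrivial invariant subspace. -/
def XRep.IsSimple (A : XRep F X V) : Prop :=
  Nontrivial V ∧
  ∀ S : Submodule F V,
    (∀ m : X₂, S.map (A.P m) ≤ S) → (∀ g : X₁, S.map (A.Q g) ≤ S) →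
    S = ⊥ ∨ S = ⊤

/-- `A` is a direct summand (retract) of the vacuum object `V_K`. -/
def IsVacuumSummand [X.δ.range.Normal] (A : XRep F X V) : Prop :=
  ∃ (ι : V →ₗ[F] VacuumCarrier F X) (π : VacuumCarrier F X →ₗ[F] V),
    (∀ m : X₂, ι ∘ₗ A.P m = vacuumP F X m ∘ₗ ι) ∧
    (∀ g : X₁, ι ∘ₗ A.Q g = vacuumQ F X g ∘ₗ ι) ∧
    (∀ m : X₂, π ∘ₗ vacuumP F X m = A.P m ∘ₗ π) ∧
    (∀ g : X₁, π ∘ₗ vacuumQ F X g = A.Q g ∘ₗ π) ∧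
    π ∘ₗ ι = LinearMap.id

end Simple

section Transparent

variable {F : Type} [Field F] {X₁ X₂ : Type} [Group X₁] [Group X₂]
  [Fintype X₁] [Fintype X₂] [DecidableEq X₂] {X : CrossedModule X₁ X₂}

/-- A representation is transparent if its double braiding with every object of
`M(X)` is the identity. -/
def XRep.Transparent {W : Type} [AddCommGroup W] [Module F W] (B : XRep F X W) : Prop :=
  ∀ (V : Type) (_ : AddCommGroup V) (_ : Module F V) (A : XRep F X V),
    braidAux X B.P A.Q ∘ₗ braidAux X A.P B.Q = LinearMap.id ∧
    braidAux X A.P B.Q ∘ₗ braidAux X B.P A.Q = LinearMap.id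

/-- Two crossed-module representations are isomorphic. -/
def XRepIso {V W : Type} [AddCommGroup V] [Module F V] [AddCommGroup W] [Module F W]
    (A : XRep F X V) (B : XRep F X W) : Prop :=
  ∃ f : V →ₗ[F] W, Function.Bijective f ∧ IsXRepHom A B f

end Transparent

section GX

variable {X₁ X₂ : Type} [Group X₁] [Group X₂]

lemma CrossedModule.one_act (X : CrossedModule X₁ X₂) (g : X₁) : X.act 1 g = 1 := by
  have h := X.act_hom 1 1 g
  rw [mul_one] at h
  exact mul_left_cancel (a := X.act 1 g) (by rw [mul_one]; exact h.symm)

/-- The action of `X₁` on `X₂` preserves `ker ∂`, giving an action on the kernel. -/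
def CrossedModule.kerAct (X : CrossedModule X₁ X₂) (k : X.δ.ker) (g : X₁) : X.δ.ker :=
  ⟨X.act (k : X₂) g, by
    have hk : X.δ (k : X₂) = 1 := k.2
    simp [MonoidHom.mem_ker, X.equivariance, hk]⟩

lemma CrossedModule.kerAct_one (X : CrossedModule X₁ X₂) (g : X₁) :
    X.kerAct 1 g = 1 := by
  apply Subtype.ext
  show X.act ((1 : X.δ.ker) : X₂) g = ((1 : X.δ.ker) : X₂)
  simpa using X.one_act g

lemma CrossedModule.kerAct_mul (X : CrossedModule X₁ X₂) (k k' : X.δ.ker) (g : X₁) :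
    X.kerAct (k * k') g = X.kerAct k g * X.kerAct k' g := by
  apply Subtype.ext
  simpa [CrossedModule.kerAct] using X.act_hom (k : X₂) (k' : X₂) g

variable (F : Type) [Field F] (X : CrossedModule X₁ X₂) [X.δ.range.Normal]

/-- The character group `(ker ∂)* = Hom(ker ∂, F^×)` of the abelian group `ker ∂`. -/
abbrev KChar : Type := X.δ.ker →* Fˣ

/-- The cokernel `coker ∂ = X₁ / Im ∂`. -/
abbrev Coker : Type := X₁ ⧸ X.δ.range

/-- The dual action `μ̂` of `coker ∂` on `(ker ∂)*`: `(χ^c)(k) = χ(k^{c⁻¹})`,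
computed via a coset representative. -/
noncomputable def dualActQ (c : Coker X) (χ : KChar F X) : KChar F X where
  toFun k := χ (X.kerAct k (Quotient.out c)⁻¹)
  map_one' := by try simp only []
                 rw [X.kerAct_one, map_one]
  map_mul' k k' := by try simp only []
                      rw [X.kerAct_mul, map_mul]

variable {V : Type} [AddCommGroup V] [Module F V]

/-- `ρ` is a representation of the group `G(X) = (ker ∂)* ⋊_{μ̂} (coker ∂)` on `V`
(with the semidirect product multiplication
`(χ, c) · (χ', c') = (χ^{c'} χ', c c')`). -/
def IsGRep (ρ : KChar F X × Coker X → (V →ₗ[F] V)) : Prop :=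
  ρ (1, 1) = LinearMap.id ∧
  ∀ (χ χ' : KChar F X) (c c' : Coker X),
    ρ (dualActQ F X c' χ * χ', c * c') = ρ (χ, c) ∘ₗ ρ (χ', c')

variable [Fintype X₂] [DecidableEq X₂]
open Classical in

/-- The grading part of the functor `F : G(X)-Rep → M(X)`:
`P^ρ(m) = (1/|K|) ∑_{χ ∈ K*} χ(m) ρ(χ, I)` for `m ∈ K = ker ∂`, and `0` otherwise. -/
noncomputable def FobP (ρ : KChar F X × Coker X → (V →ₗ[F] V)) (m : X₂) :
    V →ₗ[F] V :=
  if h : m ∈ X.δ.ker then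
    (Nat.card X.δ.ker : F)⁻¹ • ∑ᶠ χ : KChar F X, ((χ ⟨m, h⟩ : Fˣ) : F) • ρ (χ, 1)
  else 0

/-- The action part of the functor `F : G(X)-Rep → M(X)`: `Q^ρ(g) = ρ(1, Ig)`. -/
def FobQ (ρ : KChar F X × Coker X → (V →ₗ[F] V)) (g : X₁) : V →ₗ[F] V :=
  ρ (1, QuotientGroup.mk g)

end GX

section MyAuxGroup
variable {X₁ X₂ : Type} [Group X₁] [Group X₂]

lemma CrossedModule.my_one_act (X : CrossedModule X₁ X₂) (g : X₁) : X.act 1 g = 1 := by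
  have h := X.act_hom 1 1 g
  rw [mul_one] at h
  exact (left_eq_mul.mp h)

lemma CrossedModule.act_act_inv (X : CrossedModule X₁ X₂) (m : X₂) (g : X₁) :
    X.act (X.act m g) g⁻¹ = m := by
  rw [← X.act_mul, mul_inv_cancel, X.act_one]

lemma CrossedModule.act_inj (X : CrossedModule X₁ X₂) (g : X₁) {m n : X₂}
    (h : X.act m g = X.act n g) : m = n := by
  have := congrArg (fun z => X.act z g⁻¹) h
  simpa [X.act_act_inv] using this

lemma CrossedModule.act_eq_one_iff (X : CrossedModule X₁ X₂) (m : X₂) (g : X₁) :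
    X.act m g = 1 ↔ m = 1 := by
  constructor
  · intro h; exact X.act_inj g (by rw [h, X.my_one_act])
  · intro h; rw [h, X.my_one_act]

lemma CrossedModule.ker_central (X : CrossedModule X₁ X₂) {m : X₂} (h : X.δ m = 1)
    (x : X₂) : m * x * m⁻¹ = x := by
  have hp := X.peiffer x m
  rw [h, X.act_one] at hp
  conv_lhs => rw [hp]
  group

lemma CrossedModule.act_peiffer_eq (X : CrossedModule X₁ X₂) (y m : X₂) :
    X.act y (X.δ m) = m⁻¹ * y * m := X.peiffer y m

end MyAuxGroup


section MyAuxTest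
variable {F : Type} [Field F] {X₁ X₂ : Type} [Group X₁] [Group X₂]
  [Fintype X₁] [Fintype X₂] [DecidableEq X₂] (X : CrossedModule X₁ X₂)

/-- Test object on functions on `X₁`: grading concentrated at `1`, right translation action. -/
noncomputable def testA2 : XRep F X (X₁ → F) where
  P m := if m = 1 then LinearMap.id else 0
  Q g := { toFun := fun f x => f (x * g), map_add' := fun _ _ => rfl,
           map_smul' := fun _ _ => rfl }
  P_orth := by
    intro m n
    by_cases hm : m = 1 <;> by_cases hn : n = 1 <;>
      simp [hm, hn, eq_comm]
  P_total := by
    rw [Finset.sum_ite_eq' Finset.univ (1 : X₂) (fun _ => LinearMap.id)]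
    simp
  Q_one := by
    apply LinearMap.ext; intro f; funext x; simp
  Q_mul := by
    intro g h; apply LinearMap.ext; intro f; funext x
    simp [mul_assoc]
  PQ_compat := by
    intro m g
    by_cases hm : m = 1
    · simp [hm, X.my_one_act]
    · have : X.act m g ≠ 1 := fun h => hm ((X.act_eq_one_iff m g).mp h)
      simp [hm, this]

/-- Test object on functions on `X₂`: tautological grading, conjugation-type action. -/
noncomputable def testA1 : XRep F X (X₂ → F) where
  P m := { toFun := fun f x => if x = m then f x else 0,
           map_add' := by intro f g; funext x; by_cases h : x = m <;> simp [h],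
           map_smul' := by intro c f; funext x; by_cases h : x = m <;> simp [h] }
  Q g := { toFun := fun f x => f (X.act x g), map_add' := fun _ _ => rfl,
           map_smul' := fun _ _ => rfl }
  P_orth := by
    intro m n
    by_cases hmn : m = n
    · subst hmn
      apply LinearMap.ext; intro f; funext x
      by_cases h : x = m <;> simp [h]
    · apply LinearMap.ext; intro f; funext x
      by_cases h' : x = m <;> simp [h', hmn]
  P_total := by
    apply LinearMap.ext; intro f; funext x
    simp only [LinearMap.sum_apply, LinearMap.coe_mk, AddHom.coe_mk, Finset.sum_apply]
    rw [Finset.sum_ite_eq Finset.univ x (fun _ => f x)]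
    simp
  Q_one := by
    apply LinearMap.ext; intro f; funext x; simp [X.act_one]
  Q_mul := by
    intro g h; apply LinearMap.ext; intro f; funext x
    simp [X.act_mul]
  PQ_compat := by
    intro m g
    apply LinearMap.ext; intro f; funext x
    by_cases h : x = m
    · simp [h]
    · have : X.act x g ≠ X.act m g := fun hc => h (X.act_inj g hc)
      simp [h, this]

variable {W : Type} [AddCommGroup W] [Module F W]

open TensorProduct

/-- Pairing with evaluation at `y` in the left tensor factor. -/
noncomputable def pairL {ι : Type} (y : ι) : ((ι → F) ⊗[F] W) →ₗ[F] W :=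
  (TensorProduct.lid F W).toLinearMap ∘ₗ TensorProduct.map (LinearMap.proj y) LinearMap.id

lemma pairL_tmul {ι : Type} (y : ι) (f : ι → F) (w : W) :
    pairL y (f ⊗ₜ[F] w) = f y • w := by
  simp [pairL]

/-- Pairing with evaluation at `y` in the right tensor factor. -/
noncomputable def pairR {ι : Type} (y : ι) : (W ⊗[F] (ι → F)) →ₗ[F] W :=
  (TensorProduct.rid F W).toLinearMap ∘ₗ TensorProduct.map LinearMap.id (LinearMap.proj y)

lemma pairR_tmul {ι : Type} (y : ι) (f : ι → F) (w : W) :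
    pairR y (w ⊗ₜ[F] f) = f y • w := by
  simp [pairR]

lemma XRep.P_apply_P (B : XRep F X W) (m n : X₂) (w : W) :
    B.P m (B.P n w) = if m = n then B.P m w else 0 := by
  have h := DFunLike.congr_fun (B.P_orth m n) w
  simp only [LinearMap.comp_apply] at h
  rw [h]
  by_cases hmn : m = n <;> simp [hmn]

lemma XRep.P_total_apply (B : XRep F X W) (w : W) :
    ∑ m : X₂, B.P m w = w := by
  have h := DFunLike.congr_fun B.P_total w
  simpa [LinearMap.sum_apply] using h

lemma transparent_P_eq_zero (B : XRep F X W) (hB : B.Transparent) {m₀ : X₂}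
    (hm : X.δ m₀ ≠ 1) : B.P m₀ = 0 := by
  classical
  have h := (hB (X₁ → F) inferInstance inferInstance (testA2 X)).1
  apply LinearMap.ext; intro w
  set v : X₁ → F := Pi.single (1 : X₁) (1 : F) with hv_def
  have hv : braidAux X (testA2 (F := F) X).P B.Q (v ⊗ₜ[F] w) = w ⊗ₜ[F] v := by
    rw [braidAux, LinearMap.sum_apply]
    rw [Finset.sum_eq_single (1 : X₂)]
    · simp [testA2, B.Q_one]
    · intro b _ hb
      simp [testA2, hb]
    · intro habs; exact absurd (Finset.mem_univ _) habs
  have key := DFunLike.congr_fun h (v ⊗ₜ[F] w)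
  rw [LinearMap.comp_apply, hv, LinearMap.id_apply] at key
  rw [braidAux, LinearMap.sum_apply] at key
  have key2 := congrArg (pairL (W := W) ((X.δ m₀)⁻¹)) key
  rw [map_sum, pairL_tmul] at key2
  have hcoef : ∀ n : X₂,
      pairL (W := W) ((X.δ m₀)⁻¹)
        ((TensorProduct.map ((testA2 (F := F) X).Q (X.δ n)) (B.P n) ∘ₗ
          (TensorProduct.comm F W (X₁ → F)).toLinearMap) (w ⊗ₜ[F] v))
      = (if X.δ n = X.δ m₀ then (1:F) else 0) • B.P n w := by
    intro n
    simp only [LinearMap.comp_apply, LinearEquiv.coe_coe, TensorProduct.comm_tmul,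
      TensorProduct.map_tmul]
    rw [pairL_tmul]
    congr 1
    show v ((X.δ m₀)⁻¹ * X.δ n) = _
    rw [hv_def, Pi.single_apply]
    by_cases hc : X.δ n = X.δ m₀
    · simp [hc]
    · have : (X.δ m₀)⁻¹ * X.δ n ≠ 1 := by
        intro hcc; exact hc (by rwa [inv_mul_eq_one, eq_comm] at hcc)
      simp [this, hc]
  simp only [hcoef] at key2
  have hrhs : v ((X.δ m₀)⁻¹) • w = 0 := by
    rw [hv_def, Pi.single_apply, if_neg (by simpa [inv_eq_one] using hm)]
    simp
  rw [hrhs] at key2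
  have key3 : ∑ n : X₂, B.P m₀ ((if X.δ n = X.δ m₀ then (1:F) else 0) • B.P n w)
      = B.P m₀ w := by
    rw [Finset.sum_eq_single m₀]
    · simp [XRep.P_apply_P]
    · intro b _ hb
      rw [map_smul, XRep.P_apply_P, if_neg (Ne.symm hb), smul_zero]
    · intro habs; exact absurd (Finset.mem_univ _) habs
  show B.P m₀ w = (0 : W →ₗ[F] W) w
  rw [LinearMap.zero_apply, ← key3, ← map_sum, key2, map_zero]

lemma transparent_Q_delta (B : XRep F X W) (hB : B.Transparent) (n₀ : X₂) :
    B.Q (X.δ n₀) = LinearMap.id := by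
  classical
  have hP0 : ∀ m : X₂, X.δ m ≠ 1 → B.P m = 0 := fun m hm =>
    transparent_P_eq_zero X B hB hm
  have h := (hB (X₂ → F) inferInstance inferInstance (testA1 X)).2
  apply LinearMap.ext; intro w
  set v : X₂ → F := Pi.single n₀ (1 : F) with hv_def
  have hAQ : ∀ m : X₂, (testA1 (F := F) X).Q (X.δ m) v = Pi.single (m * n₀ * m⁻¹) (1:F) := by
    intro m; funext y
    show v (X.act y (X.δ m)) = _
    rw [X.act_peiffer_eq, hv_def, Pi.single_apply, Pi.single_apply]
    refine if_congr ?_ rfl rfl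
    constructor
    · intro hc; rw [← hc]; group
    · intro hc; rw [hc]; group
  have houter : ∀ (f : X₂ → F) (u : W),
      pairR (W := W) n₀ (braidAux X (testA1 (F := F) X).P B.Q (f ⊗ₜ[F] u))
        = f n₀ • B.Q (X.δ n₀) u := by
    intro f u
    rw [braidAux, LinearMap.sum_apply, map_sum]
    rw [Finset.sum_eq_single n₀]
    · simp only [LinearMap.comp_apply, LinearEquiv.coe_coe, TensorProduct.comm_tmul,
        TensorProduct.map_tmul, pairR_tmul]
      congr 1
      show (if n₀ = n₀ then f n₀ else 0) = f n₀
      simp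
    · intro b _ hb
      simp only [LinearMap.comp_apply, LinearEquiv.coe_coe, TensorProduct.comm_tmul,
        TensorProduct.map_tmul, pairR_tmul]
      show (if n₀ = b then f n₀ else 0) • (B.Q (X.δ b)) u = 0
      rw [if_neg (Ne.symm hb), zero_smul]
    · exact fun habs => absurd (Finset.mem_univ _) habs
  have hinner : braidAux X B.P (testA1 (F := F) X).Q (w ⊗ₜ[F] v)
      = ∑ m : X₂, (Pi.single (m * n₀ * m⁻¹) (1:F)) ⊗ₜ[F] B.P m w := by
    rw [braidAux, LinearMap.sum_apply]
    refine Finset.sum_congr rfl fun m _ => ?_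
    simp only [LinearMap.comp_apply, LinearEquiv.coe_coe, TensorProduct.comm_tmul,
      TensorProduct.map_tmul, hAQ]
  have key := DFunLike.congr_fun h (w ⊗ₜ[F] v)
  rw [LinearMap.comp_apply, hinner, LinearMap.id_apply] at key
  have key2 := congrArg (pairR (W := W) n₀) key
  rw [map_sum, map_sum, pairR_tmul] at key2
  simp only [houter] at key2
  have hterm : ∀ m : X₂,
      (Pi.single (m * n₀ * m⁻¹) (1:F) : X₂ → F) n₀ • B.Q (X.δ n₀) (B.P m w)
        = B.Q (X.δ n₀) (B.P m w) := by
    intro m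
    by_cases hm : X.δ m = 1
    · rw [X.ker_central hm, Pi.single_apply, if_pos rfl, one_smul]
    · rw [hP0 m hm]; simp
  rw [Finset.sum_congr rfl (fun m _ => hterm m), ← map_sum, XRep.P_total_apply] at key2
  rw [hv_def, Pi.single_apply, if_pos rfl, one_smul] at key2
  rw [key2, LinearMap.id_apply]

end MyAuxTest


section MyChar

lemma my_sum_char_eq_zero {K : Type} [Group K] [Fintype K] {F : Type} [Field F]
    {ψ : K →* Fˣ} (hψ : ψ ≠ 1) : ∑ k : K, ((ψ k : Fˣ) : F) = 0 := by
  obtain ⟨k₀, hk₀⟩ : ∃ k, ψ k ≠ 1 := by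
    by_contra hc; push_neg at hc
    exact hψ (MonoidHom.ext fun k => hc k)
  refine eq_zero_of_mul_eq_self_left (b := ((ψ k₀ : Fˣ) : F)) ?_ ?_
  · exact fun hcc => hk₀ (Units.ext (by simpa using hcc))
  · rw [Finset.mul_sum]
    exact Fintype.sum_bijective (fun k => k₀ * k) (Group.mulLeft_bijective k₀)
      (fun k => ((ψ k₀ : Fˣ) : F) * ((ψ k : Fˣ) : F)) (fun k => ((ψ k : Fˣ) : F))
      (fun x => by
        show ((ψ k₀ : Fˣ) : F) * ((ψ x : Fˣ) : F) = ((ψ (k₀ * x) : Fˣ) : F)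
        rw [map_mul, Units.val_mul])

variable {F : Type} [Field F] {X₁ X₂ : Type} [Group X₁] [Group X₂]
  [Fintype X₁] [Fintype X₂] [DecidableEq X₂]

/-- `ker ∂` is commutative. -/
@[reducible]
noncomputable def kerCG (X : CrossedModule X₁ X₂) : CommGroup ↥X.δ.ker :=
  { (inferInstance : Group ↥X.δ.ker) with
    mul_comm := by
      intro a b
      apply Subtype.ext
      show (↑a : X₂) * ↑b = ↑b * ↑a
      have hc := X.ker_central (m := (↑a : X₂)) a.2 (↑b : X₂)
      conv_rhs => rw [← hc]
      group }

variable [IsAlgClosed F] [CharZero F] (X : CrossedModule X₁ X₂)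

lemma kchar_finite : Finite (KChar F X) := by
  letI : CommGroup ↥X.δ.ker := kerCG X
  haveI : NeZero ((Monoid.exponent ↥X.δ.ker : F)) :=
    ⟨Nat.cast_ne_zero.mpr (Monoid.exponent_ne_zero_of_finite (G := ↥X.δ.ker))⟩
  obtain ⟨e⟩ := CommGroup.monoidHom_mulEquiv_of_hasEnoughRootsOfUnity ↥X.δ.ker F
  exact Finite.of_equiv _ e.toEquiv.symm

lemma kchar_card : Nat.card (KChar F X) = Nat.card X.δ.ker := by
  letI : CommGroup ↥X.δ.ker := kerCG X
  haveI : NeZero ((Monoid.exponent ↥X.δ.ker : F)) :=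
    ⟨Nat.cast_ne_zero.mpr (Monoid.exponent_ne_zero_of_finite (G := ↥X.δ.ker))⟩
  obtain ⟨e⟩ := CommGroup.monoidHom_mulEquiv_of_hasEnoughRootsOfUnity ↥X.δ.ker F
  exact Nat.card_congr e.toEquiv

open Classical in
lemma kchar_sum_eq [Fintype (KChar F X)] (a : ↥X.δ.ker) :
    ∑ χ : KChar F X, ((χ a : Fˣ) : F)
      = if a = 1 then (Nat.card X.δ.ker : F) else 0 := by
  classical
  split_ifs with h
  · subst h
    simp only [map_one, Units.val_one]
    rw [Finset.sum_const, Finset.card_univ, nsmul_eq_mul, mul_one,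
      ← Nat.card_eq_fintype_card, kchar_card]
  · letI : CommGroup ↥X.δ.ker := kerCG X
    haveI : NeZero ((Monoid.exponent ↥X.δ.ker : F)) :=
      ⟨Nat.cast_ne_zero.mpr (Monoid.exponent_ne_zero_of_finite (G := ↥X.δ.ker))⟩
    obtain ⟨χ₀, hχ₀⟩ :=
      CommGroup.exists_apply_ne_one_of_hasEnoughRootsOfUnity ↥X.δ.ker F h
    refine eq_zero_of_mul_eq_self_left (b := ((χ₀ a : Fˣ) : F)) ?_ ?_
    · exact fun hcc => hχ₀ (Units.ext (by simpa using hcc))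
    · rw [Finset.mul_sum]
      exact Fintype.sum_bijective (fun χ : KChar F X => χ₀ * χ)
        (Group.mulLeft_bijective χ₀)
        (fun χ => ((χ₀ a : Fˣ) : F) * ((χ a : Fˣ) : F)) (fun χ => ((χ a : Fˣ) : F))
        (fun x => by
          show ((χ₀ a : Fˣ) : F) * ((x a : Fˣ) : F) = (((χ₀ * x) a : Fˣ) : F)
          rw [MonoidHom.mul_apply, Units.val_mul])

open Classical in
lemma kchar_sum_ker [Fintype ↥X.δ.ker] (ψ : KChar F X) :
    ∑ k : X.δ.ker, ((ψ k : Fˣ) : F)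
      = if ψ = 1 then (Nat.card X.δ.ker : F) else 0 := by
  classical
  split_ifs with h
  · subst h
    simp only [MonoidHom.one_apply, Units.val_one]
    rw [Finset.sum_const, Finset.card_univ, nsmul_eq_mul, mul_one,
      Nat.card_eq_fintype_card]
  · exact my_sum_char_eq_zero h

end MyChar

section MyKerAct
variable {X₁ X₂ : Type} [Group X₁] [Group X₂]

lemma CrossedModule.kerAct_kerAct (X : CrossedModule X₁ X₂) (k : X.δ.ker) (g h : X₁) :
    X.kerAct (X.kerAct k g) h = X.kerAct k (g * h) :=
  Subtype.ext (X.act_mul (↑k) g h).symm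

lemma CrossedModule.kerAct_id (X : CrossedModule X₁ X₂) (k : X.δ.ker) :
    X.kerAct k 1 = k := Subtype.ext (X.act_one (↑k))

lemma CrossedModule.kerAct_bijective (X : CrossedModule X₁ X₂) (g : X₁) :
    Function.Bijective (fun k => X.kerAct k g) := by
  constructor
  · intro a b hab
    have := congrArg (fun z => X.kerAct z g⁻¹) hab
    simpa [X.kerAct_kerAct, X.kerAct_id] using this
  · intro j
    exact ⟨X.kerAct j g⁻¹, by simp [X.kerAct_kerAct, X.kerAct_id]⟩

end MyKerAct

section MyRho
variable {F : Type} [Field F] {X₁ X₂ : Type} [Group X₁] [Group X₂]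
  [Fintype X₁] [Fintype X₂] [DecidableEq X₂] (X : CrossedModule X₁ X₂)
  [X.δ.range.Normal]

/-- The inverse of the dual action `dualActQ c`. -/
noncomputable def pullChar (c : Coker X) (χ : KChar F X) : KChar F X where
  toFun k := χ (X.kerAct k (Quotient.out c))
  map_one' := by
    show χ (X.kerAct 1 (Quotient.out c)) = 1
    rw [X.kerAct_one, map_one]
  map_mul' k k' := by
    show χ (X.kerAct (k * k') (Quotient.out c)) = _
    rw [X.kerAct_mul, map_mul]

lemma dualActQ_pullChar (c : Coker X) (χ : KChar F X) :
    dualActQ F X c (pullChar X c χ) = χ := by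
  apply MonoidHom.ext; intro k
  show (pullChar X c χ) (X.kerAct k (Quotient.out c)⁻¹) = χ k
  show χ (X.kerAct (X.kerAct k (Quotient.out c)⁻¹) (Quotient.out c)) = χ k
  rw [X.kerAct_kerAct, inv_mul_cancel, X.kerAct_id]

variable {V V' : Type} [AddCommGroup V] [Module F V] [AddCommGroup V'] [Module F V']

lemma my_comp_sum {ι : Type} (f : V →ₗ[F] V') (s : Finset ι) (T : ι → (V →ₗ[F] V)) :
    f ∘ₗ (∑ i ∈ s, T i) = ∑ i ∈ s, f ∘ₗ T i := by
  apply LinearMap.ext; intro w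
  simp [LinearMap.sum_apply, map_sum]

lemma my_sum_comp {ι : Type} (f : V →ₗ[F] V') (s : Finset ι) (T : ι → (V' →ₗ[F] V')) :
    (∑ i ∈ s, T i) ∘ₗ f = ∑ i ∈ s, T i ∘ₗ f := by
  apply LinearMap.ext; intro w
  simp [LinearMap.sum_apply]

lemma my_mk_out_eq (c : Coker X) : (QuotientGroup.mk (Quotient.out c) : Coker X) = c :=
  Quotient.out_eq c

variable [IsAlgClosed F] [CharZero F]

/-- Fourier inversion for a `G(X)`-representation. -/
lemma rho_inversion [Fintype ↥X.δ.ker] [Fintype (KChar F X)]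
    (ρ : KChar F X × Coker X → (V →ₗ[F] V)) (χ : KChar F X) :
    ρ (χ, 1) = ∑ k : X.δ.ker, (((χ k)⁻¹ : Fˣ) : F) • FobP F X ρ (↑k : X₂) := by
  classical
  have hFob : ∀ k : X.δ.ker, FobP F X ρ (↑k : X₂)
      = (Nat.card X.δ.ker : F)⁻¹ • ∑ χ' : KChar F X, ((χ' k : Fˣ) : F) • ρ (χ', 1) := by
    intro k
    unfold FobP
    rw [dif_pos k.2, finsum_eq_sum_of_fintype]
  have hN : ((Nat.card X.δ.ker : F)) ≠ 0 :=
    Nat.cast_ne_zero.mpr Nat.card_pos.ne'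
  symm
  calc ∑ k : X.δ.ker, (((χ k)⁻¹ : Fˣ) : F) • FobP F X ρ (↑k : X₂)
      = ∑ k : X.δ.ker, ∑ χ' : KChar F X,
          ((Nat.card X.δ.ker : F)⁻¹ * (((χ⁻¹ * χ') k : Fˣ) : F)) • ρ (χ', 1) := by
        refine Finset.sum_congr rfl fun k _ => ?_
        rw [hFob k, smul_smul, Finset.smul_sum]
        refine Finset.sum_congr rfl fun χ' _ => ?_
        rw [smul_smul]
        congr 1
        simp only [MonoidHom.mul_apply, MonoidHom.inv_apply, Units.val_mul,
          Units.val_inv_eq_inv_val]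
        try ring
    _ = ∑ χ' : KChar F X,
          ((Nat.card X.δ.ker : F)⁻¹ * ∑ k : X.δ.ker, (((χ⁻¹ * χ') k : Fˣ) : F))
            • ρ (χ', 1) := by
        rw [Finset.sum_comm]
        refine Finset.sum_congr rfl fun χ' _ => ?_
        rw [Finset.mul_sum, Finset.sum_smul]
    _ = ∑ χ' : KChar F X, (if χ' = χ then (1:F) else 0) • ρ (χ', 1) := by
        refine Finset.sum_congr rfl fun χ' _ => ?_
        rw [kchar_sum_ker]
        congr 1
        by_cases hc : χ' = χ
        · have h1 : χ⁻¹ * χ' = 1 := by rw [hc]; exact inv_mul_cancel χ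
          rw [if_pos h1, if_pos hc, inv_mul_cancel₀ hN]
        · have h1 : χ⁻¹ * χ' ≠ 1 := by
            intro hcc
            apply hc
            apply MonoidHom.ext; intro k
            have h2 := DFunLike.congr_fun hcc k
            rw [MonoidHom.mul_apply, MonoidHom.inv_apply, MonoidHom.one_apply] at h2
            exact (inv_mul_eq_one.mp h2).symm
          rw [if_neg h1, if_neg hc, mul_zero]
    _ = ρ (χ, 1) := by
        simp only [ite_smul, one_smul, zero_smul]
        rw [Finset.sum_ite_eq' Finset.univ χ (fun χ' => ρ (χ', 1))]
        simp

/-- Decomposition of a `G(X)`-representation value. -/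
lemma rho_decomp (ρ : KChar F X × Coker X → (V →ₗ[F] V)) (hρ : IsGRep F X ρ)
    (χ : KChar F X) (c : Coker X) :
    ρ (χ, c) = ρ (pullChar X c χ, 1) ∘ₗ ρ (1, c) := by
  have h := hρ.2 (pullChar X c χ) 1 1 c
  have e1 : dualActQ F X c (pullChar X c χ) * (1 : KChar F X) = χ := by
    apply MonoidHom.ext; intro k
    rw [MonoidHom.mul_apply, MonoidHom.one_apply, mul_one]
    exact DFunLike.congr_fun (dualActQ_pullChar X c χ) k
  have e2 : (1 : Coker X) * c = c := one_mul c
  rw [e1, e2] at h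
  exact h

end MyRho


section MyComp
variable {F : Type} [Field F] {X₁ X₂ : Type} [Group X₁] [Group X₂]
  [Fintype X₁] [Fintype X₂] [DecidableEq X₂] (X : CrossedModule X₁ X₂)
  {W : Type} [AddCommGroup W] [Module F W]
  {V V' : Type} [AddCommGroup V] [Module F V] [AddCommGroup V'] [Module F V']

lemma my_comp_smul (f : V →ₗ[F] V') (c : F) (T : V →ₗ[F] V) :
    f ∘ₗ (c • T) = c • (f ∘ₗ T) := by
  apply LinearMap.ext; intro w; simp

lemma my_smul_comp (f : V →ₗ[F] V') (c : F) (T : V' →ₗ[F] V') :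
    (c • T) ∘ₗ f = c • (T ∘ₗ f) := by
  apply LinearMap.ext; intro w; simp

lemma my_sum_smul_comp {ι κ : Type} (s : Finset ι) (t : Finset κ)
    (c : ι → F) (d : κ → F) (A : ι → (W →ₗ[F] W)) (Bf : κ → (W →ₗ[F] W)) :
    (∑ i ∈ s, c i • A i) ∘ₗ (∑ j ∈ t, d j • Bf j)
      = ∑ i ∈ s, ∑ j ∈ t, (c i * d j) • (A i ∘ₗ Bf j) := by
  apply LinearMap.ext; intro w
  simp only [LinearMap.comp_apply, LinearMap.sum_apply, LinearMap.smul_apply, map_sum,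
    map_smul, smul_smul]
  rw [Finset.sum_comm]
  refine Finset.sum_congr rfl fun j _ => ?_
  rw [Finset.smul_sum]
  refine Finset.sum_congr rfl fun i _ => ?_
  rw [smul_smul, mul_comm]

/-- The key commutation computation: `(Q g P k)(Q g' P k') = [k^{g'} = k'] Q(gg') P k'`. -/
lemma my_QPQP (B : XRep F X W) (k k' : X.δ.ker) (g g' : X₁) :
    (B.Q g ∘ₗ B.P (↑k : X₂)) ∘ₗ (B.Q g' ∘ₗ B.P (↑k' : X₂))
      = if X.kerAct k g' = k' then B.Q (g * g') ∘ₗ B.P (↑k' : X₂) else 0 := by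
  have hPQ : ∀ w : W, B.P (↑k : X₂) (B.Q g' w) = B.Q g' (B.P (X.act (↑k) g') w) := by
    intro w
    have := DFunLike.congr_fun (B.PQ_compat (↑k : X₂) g') w
    simpa [LinearMap.comp_apply] using this
  by_cases hc : X.kerAct k g' = k'
  · have hc' : X.act (↑k : X₂) g' = (↑k' : X₂) := congrArg Subtype.val hc
    rw [if_pos hc]
    apply LinearMap.ext; intro w
    simp only [LinearMap.comp_apply]
    rw [hPQ, XRep.P_apply_P, if_pos hc', hc', B.Q_mul]
    rfl
  · have hc' : X.act (↑k : X₂) g' ≠ (↑k' : X₂) := fun h => hc (Subtype.ext h)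
    rw [if_neg hc]
    apply LinearMap.ext; intro w
    simp only [LinearMap.comp_apply, LinearMap.zero_apply]
    rw [hPQ, XRep.P_apply_P, if_neg hc', map_zero, map_zero]

end MyComp

/-- Every simple transparent object of `M(X)` lies in the (strict) essential image
of the functor `F : G(X)-Rep → M(X)` — indeed every transparent object does — and
`F` is fully faithful; consequently `F` is an equivalence between `G(X)-Rep` and
the full subcategory of transparent objects of `M(X)`. -/
theorem functor_F_equivalence_onto_transparent
    {F : Type} [Field F] [IsAlgClosed F] [CharZero F]
    {X₁ X₂ : Type} [Group X₁] [Group X₂] [Fintype X₁] [Fintype X₂] [DecidableEq X₂]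
    (X : CrossedModule X₁ X₂) [X.δ.range.Normal] :
    -- essential surjectivity onto (in particular simple) transparent objects
    (∀ (W : Type) (_ : AddCommGroup W) (_ : Module F W) (_ : FiniteDimensional F W)
      (B : XRep F X W), B.Transparent →
      ∃ ρ : KChar F X × Coker X → (W →ₗ[F] W),
        IsGRep F X ρ ∧ FobP F X ρ = B.P ∧ FobQ F X ρ = B.Q) ∧
    -- full faithfulness of `F`
    (∀ (V V' : Type) (_ : AddCommGroup V) (_ : Module F V) (_ : FiniteDimensional F V)
      (_ : AddCommGroup V') (_ : Module F V') (_ : FiniteDimensional F V')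
      (ρ : KChar F X × Coker X → (V →ₗ[F] V)) (_ : IsGRep F X ρ)
      (ρ' : KChar F X × Coker X → (V' →ₗ[F] V')) (_ : IsGRep F X ρ')
      (f : V →ₗ[F] V'),
      (∀ p : KChar F X × Coker X, f ∘ₗ ρ p = ρ' p ∘ₗ f) ↔
        ((∀ m : X₂, f ∘ₗ FobP F X ρ m = FobP F X ρ' m ∘ₗ f) ∧
         (∀ g : X₁, f ∘ₗ FobQ F X ρ g = FobQ F X ρ' g ∘ₗ f))) := by
  constructor
  · -- essential surjectivity
    intro W _ _ _ B hB
    classical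
    letI : Fintype ↥X.δ.ker := Fintype.ofFinite _
    haveI : Finite (KChar F X) := kchar_finite X
    letI : Fintype (KChar F X) := Fintype.ofFinite _
    have hP0 : ∀ m : X₂, X.δ m ≠ 1 → B.P m = 0 := fun m hm =>
      transparent_P_eq_zero X B hB hm
    have hQδ : ∀ n : X₂, B.Q (X.δ n) = LinearMap.id := fun n =>
      transparent_Q_delta X B hB n
    have hQcoset : ∀ g g' : X₁,
        (QuotientGroup.mk g : Coker X) = QuotientGroup.mk g' → B.Q g = B.Q g' := by
      intro g g' hgg
      obtain ⟨n, hn⟩ := MonoidHom.mem_range.mp (QuotientGroup.eq.mp hgg)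
      have hg' : g' = g * X.δ n := by rw [hn]; group
      rw [hg', B.Q_mul, hQδ n, LinearMap.comp_id]
    have hKsum : (∑ k : X.δ.ker, B.P (↑k : X₂)) = LinearMap.id := by
      rw [← Finset.sum_subtype (Finset.univ.filter (fun m => m ∈ X.δ.ker))
        (by simp) (fun m => B.P m)]
      rw [Finset.sum_filter_of_ne]
      · exact B.P_total
      · intro m _ hm
        by_contra hmem
        exact hm (hP0 m (fun h1 => hmem (by simpa [MonoidHom.mem_ker] using h1)))
    have hQ1 : B.Q (Quotient.out (1 : Coker X)) = LinearMap.id := by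
      have h := hQcoset (Quotient.out (1 : Coker X)) 1
        (by rw [my_mk_out_eq, QuotientGroup.mk_one])
      rw [h, B.Q_one]
    set ρ : KChar F X × Coker X → (W →ₗ[F] W) :=
      fun p => ∑ k : X.δ.ker,
        (((p.1 k)⁻¹ : Fˣ) : F) • (B.Q (Quotient.out p.2) ∘ₗ B.P (↑k : X₂)) with hρdef
    have hρ1 : ∀ (χ : KChar F X) (c : Coker X), ρ (χ, c)
        = ∑ k : X.δ.ker,
          (((χ k)⁻¹ : Fˣ) : F) • (B.Q (Quotient.out c) ∘ₗ B.P (↑k : X₂)) :=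
      fun _ _ => rfl
    have hρone : ∀ c : Coker X, ρ (1, c) = B.Q (Quotient.out c) := by
      intro c
      rw [hρ1]
      simp only [MonoidHom.one_apply, inv_one, Units.val_one, one_smul]
      rw [← my_comp_sum (B.Q (Quotient.out c)) Finset.univ (fun k : X.δ.ker => B.P (↑k : X₂))]
      rw [hKsum, LinearMap.comp_id]
    have hρP : ∀ χ : KChar F X, ρ (χ, 1)
        = ∑ k : X.δ.ker, (((χ k)⁻¹ : Fˣ) : F) • B.P (↑k : X₂) := by
      intro χ
      rw [hρ1]
      refine Finset.sum_congr rfl fun k _ => ?_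
      rw [hQ1, LinearMap.id_comp]
    refine ⟨ρ, ⟨?_, ?_⟩, ?_, ?_⟩
    · -- ρ (1,1) = id
      rw [hρone, hQ1]
    · -- multiplicativity
      intro χ χ' c c'
      set a := Quotient.out c
      set a' := Quotient.out c'
      have hout : B.Q (Quotient.out (c * c')) = B.Q (a * a') := by
        apply hQcoset
        rw [my_mk_out_eq, QuotientGroup.mk_mul, my_mk_out_eq, my_mk_out_eq]
      have hRHS : ρ (χ, c) ∘ₗ ρ (χ', c')
          = ∑ k : X.δ.ker, ((((χ k)⁻¹ : Fˣ) : F) * (((χ' (X.kerAct k a'))⁻¹ : Fˣ) : F))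
              • (B.Q (a * a') ∘ₗ B.P (↑(X.kerAct k a') : X₂)) := by
        rw [hρ1, hρ1, my_sum_smul_comp]
        refine Finset.sum_congr rfl fun k _ => ?_
        have hterm : ∀ k' : X.δ.ker,
            ((((χ k)⁻¹ : Fˣ) : F) * (((χ' k')⁻¹ : Fˣ) : F))
              • ((B.Q a ∘ₗ B.P (↑k : X₂)) ∘ₗ (B.Q a' ∘ₗ B.P (↑k' : X₂)))
            = if X.kerAct k a' = k' then
                ((((χ k)⁻¹ : Fˣ) : F) * (((χ' k')⁻¹ : Fˣ) : F))
                  • (B.Q (a * a') ∘ₗ B.P (↑k' : X₂)) else 0 := by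
          intro k'
          rw [my_QPQP]
          by_cases hc : X.kerAct k a' = k'
          · rw [if_pos hc, if_pos hc]
          · rw [if_neg hc, if_neg hc, smul_zero]
        rw [Finset.sum_congr rfl fun k' _ => hterm k']
        rw [Finset.sum_ite_eq Finset.univ (X.kerAct k a')]
        simp
      rw [hRHS, hρ1, hout]
      have hco : ∀ k : X.δ.ker,
          ((((χ k)⁻¹ : Fˣ) : F) * (((χ' (X.kerAct k a'))⁻¹ : Fˣ) : F))
              • (B.Q (a * a') ∘ₗ B.P (↑(X.kerAct k a') : X₂))
            = ((((dualActQ F X c' χ * χ') (X.kerAct k a'))⁻¹ : Fˣ) : F)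
              • (B.Q (a * a') ∘ₗ B.P (↑(X.kerAct k a') : X₂)) := by
        intro k
        congr 1
        have e1 : (dualActQ F X c' χ * χ') (X.kerAct k a')
            = χ (X.kerAct (X.kerAct k a') a'⁻¹) * χ' (X.kerAct k a') := rfl
        rw [e1, X.kerAct_kerAct, mul_inv_cancel, X.kerAct_id]
        rw [mul_inv_rev, Units.val_mul, Units.val_inv_eq_inv_val,
          Units.val_inv_eq_inv_val]
        ring
      exact (Fintype.sum_bijective (fun k => X.kerAct k a') (X.kerAct_bijective a')
        _ _ (fun k => hco k)).symm
    · -- FobP ρ = B.P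
      funext m
      by_cases hm : m ∈ X.δ.ker
      · unfold FobP
        rw [dif_pos hm, finsum_eq_sum_of_fintype]
        set mk0 : X.δ.ker := ⟨m, hm⟩ with hmk0
        have hNne : ((Nat.card X.δ.ker : F)) ≠ 0 :=
          Nat.cast_ne_zero.mpr Nat.card_pos.ne'
        calc (Nat.card X.δ.ker : F)⁻¹ • ∑ χ : KChar F X, ((χ mk0 : Fˣ) : F) • ρ (χ, 1)
            = (Nat.card X.δ.ker : F)⁻¹ • ∑ χ : KChar F X, ∑ k : X.δ.ker,
                ((χ (mk0 * k⁻¹) : Fˣ) : F) • B.P (↑k : X₂) := by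
              congr 1
              refine Finset.sum_congr rfl fun χ _ => ?_
              rw [hρP, Finset.smul_sum]
              refine Finset.sum_congr rfl fun k _ => ?_
              rw [smul_smul]
              congr 1
              rw [map_mul, map_inv, Units.val_mul, Units.val_inv_eq_inv_val]
          _ = (Nat.card X.δ.ker : F)⁻¹ • ∑ k : X.δ.ker,
                (∑ χ : KChar F X, ((χ (mk0 * k⁻¹) : Fˣ) : F)) • B.P (↑k : X₂) := by
              rw [Finset.sum_comm]
              congr 1
              refine Finset.sum_congr rfl fun k _ => ?_
              rw [Finset.sum_smul]
          _ = B.P m := by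
              have hsum : ∀ k : X.δ.ker,
                  (∑ χ : KChar F X, ((χ (mk0 * k⁻¹) : Fˣ) : F))
                    = if k = mk0 then (Nat.card X.δ.ker : F) else 0 := by
                intro k
                rw [kchar_sum_eq]
                by_cases hk : k = mk0
                · have he : mk0 * k⁻¹ = 1 := by rw [hk, mul_inv_cancel]
                  rw [if_pos he, if_pos hk]
                · have hne : mk0 * k⁻¹ ≠ 1 := fun hcc =>
                    hk (mul_inv_eq_one.mp hcc).symm
                  rw [if_neg hne, if_neg hk]
              rw [Finset.sum_congr rfl fun k _ => by rw [hsum k]]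
              simp only [ite_smul, zero_smul]
              rw [Finset.sum_ite_eq' Finset.univ mk0
                (fun k : X.δ.ker => (Nat.card X.δ.ker : F) • B.P (↑k : X₂))]
              rw [if_pos (Finset.mem_univ _), smul_smul, inv_mul_cancel₀ hNne, one_smul]
      · unfold FobP
        rw [dif_neg hm]
        exact (hP0 m (fun h1 => hm (by simpa [MonoidHom.mem_ker] using h1))).symm
    · -- FobQ ρ = B.Q
      funext g
      show ρ (1, QuotientGroup.mk g) = B.Q g
      rw [hρone]
      exact hQcoset _ _ (by rw [my_mk_out_eq])
  · -- full faithfulness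
    intro V V' _ _ _ _ _ _ ρ hρ ρ' hρ' f
    classical
    letI : Fintype ↥X.δ.ker := Fintype.ofFinite _
    haveI : Finite (KChar F X) := kchar_finite X
    letI : Fintype (KChar F X) := Fintype.ofFinite _
    constructor
    · intro h
      constructor
      · intro m
        by_cases hm : m ∈ X.δ.ker
        · unfold FobP
          rw [dif_pos hm, dif_pos hm, finsum_eq_sum_of_fintype, finsum_eq_sum_of_fintype]
          rw [my_comp_smul, my_smul_comp]
          congr 1
          rw [my_comp_sum, my_sum_comp]
          refine Finset.sum_congr rfl fun χ _ => ?_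
          rw [my_comp_smul, my_smul_comp, h (χ, 1)]
        · unfold FobP
          rw [dif_neg hm, dif_neg hm]
          apply LinearMap.ext; intro w; simp
      · intro g
        exact h (1, QuotientGroup.mk g)
    · rintro ⟨hP, hQ⟩ ⟨χ, c⟩
      have h1 : f ∘ₗ ρ (pullChar X c χ, 1) = ρ' (pullChar X c χ, 1) ∘ₗ f := by
        rw [rho_inversion X ρ, rho_inversion X ρ']
        rw [my_comp_sum, my_sum_comp]
        refine Finset.sum_congr rfl fun k _ => ?_
        rw [my_comp_smul, my_smul_comp, hP (↑k : X₂)]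
      have h2 : f ∘ₗ ρ (1, c) = ρ' (1, c) ∘ₗ f := by
        have e1 : FobQ F X ρ (Quotient.out c) = ρ (1, c) := by
          show ρ (1, QuotientGroup.mk (Quotient.out c)) = ρ (1, c)
          rw [my_mk_out_eq]
        have e2 : FobQ F X ρ' (Quotient.out c) = ρ' (1, c) := by
          show ρ' (1, QuotientGroup.mk (Quotient.out c)) = ρ' (1, c)
          rw [my_mk_out_eq]
        rw [← e1, ← e2]
        exact hQ (Quotient.out c)
      rw [rho_decomp X ρ hρ χ c, rho_decomp X ρ' hρ' χ c, ← LinearMap.comp_assoc,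
        h1, LinearMap.comp_assoc, h2, ← LinearMap.comp_assoc]
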